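/- arXiv:2303.13588 — 4 statements merged into one kernel-verified Lean document; each statement's English description precedes it below -/
import Mathlib

section
/- For x, y, z ∈ ℝ, z = max(x, 0) if and only if the three conditions z ≥ x, z ≥ 0, and z·(z − x) ≤ 0 all hold. -/
theorem relu_quadratic_encoding (x z : ℝ) :
    z = max x 0 ↔ (z ≥ x ∧ z ≥ 0 ∧ z * (z - x) ≤ 0) := by
  constructor
  · rintro rfl
    rcases le_total x 0 with h | h
    · simp [max_eq_right h, h]
    · refine ⟨le_max_left _ _, le_max_right _ _, ?_⟩
      rw [max_eq_left h]; simp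
  · rintro ⟨h1, h2, h3⟩
    have : z * (z - x) ≥ 0 ∨ z = 0 ∨ z = x := by
      rcases h2.eq_or_lt with h | h
      · right; left; linarith
      rcases (sub_nonneg.2 h1).eq_or_lt with h' | h'
      · right; right; linarith
      · left; positivity
    rcases this with h | h | h
    · have hz : z * (z - x) = 0 := le_antisymm h3 h
      rcases mul_eq_zero.1 hz with h | h
      · rw [h]; symm; rw [max_eq_right] <;> linarith
      · have : z = x := by linarith
        rw [this]; symm; exact max_eq_left (by linarith)
    · rw [h]; symm; rw [max_eq_right] <;> linarith
    · rw [h]; symm; exact max_eq_left (by linarith)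
end

section
/- For x, z ∈ ℝ and θ > 0, z = ReLU_θ(x) (the clipped ReLU: θ if x ≥ θ, x if 0 ≤ x < θ, 0 if x < 0) if and only if there exists y ∈ ℝ satisfying the six quadratic inequalities: y ≥ θ − x, y ≥ 0, (y − (θ − x))·y ≤ 0, z ≥ θ − y, z ≥ 0, and (z − (θ − y))·z ≤ 0. -/
lemma relu_char (a b : ℝ) (h1 : a ≥ b) (h2 : a ≥ 0) (h3 : (a - b) * a ≤ 0) :
    a = max b 0 := by
  have hprod : (a - b) * a = 0 := le_antisymm h3 (mul_nonneg (by linarith) h2)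
  rcases mul_eq_zero.1 hprod with h | h
  · have : a = b := by linarith
    rw [this, max_eq_left (by linarith)]
  · rw [h, max_eq_right (by linarith)]

theorem clipped_relu_quadratic_encoding (x z θ : ℝ) (hθ : 0 < θ) :
    z = (if x ≥ θ then θ else if 0 ≤ x then x else 0) ↔
      ∃ y : ℝ, y ≥ θ - x ∧ y ≥ 0 ∧ (y - (θ - x)) * y ≤ 0 ∧
        z ≥ θ - y ∧ z ≥ 0 ∧ (z - (θ - y)) * z ≤ 0 := by
  constructor
  · intro hz
    refine ⟨max (θ - x) 0, le_max_left _ _, le_max_right _ _, ?_, ?_, ?_, ?_⟩ <;>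
      rcases le_or_gt θ x with h | h <;> rcases le_or_gt 0 x with h0 | h0 <;>
      simp_all [max_def] <;> (try split_ifs) <;> nlinarith
  · rintro ⟨y, h1, h2, h3, h4, h5, h6⟩
    have hy := relu_char y (θ - x) h1 h2 h3
    have hz := relu_char z (θ - y) h4 h5 h6
    subst hy
    rw [hz]
    rcases le_or_gt θ x with h | h <;> rcases le_or_gt 0 x with h0 | h0 <;>
      simp_all [max_def] <;> (try split_ifs) <;> linarith
end

section
/- Let M be a real symmetric n×n matrix. Then min{n·λ_max(M + diag(h)) : Σh_i = 0} ≤ min{Σᵢ c_i + n·max(λ_max(M − diag(c)), 0) : c ∈ ℝⁿ, c_i ≥ 0 for all i}. -/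
open Matrix

variable {n : ℕ}

lemma eig_congr {A B : Matrix (Fin n) (Fin n) ℝ} (hA : A.IsHermitian) (hB : B.IsHermitian)
    (h : A = B) : hA.eigenvalues = hB.eigenvalues := by subst h; rfl

lemma trace_eq_sum_eig (A : Matrix (Fin n) (Fin n) ℝ) (hA : A.IsHermitian) :
    A.trace = ∑ i, hA.eigenvalues i := by
  conv_lhs => rw [hA.spectral_theorem]
  rw [Unitary.conjStarAlgAut_apply, Matrix.trace_mul_cycle, (Matrix.mem_unitaryGroup_iff').mp (hA.eigenvectorUnitary).2, Matrix.one_mul]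

  simp [Matrix.trace_diagonal]

-- shift lemma: each eigenvalue of A + s•1 is an eigenvalue of A plus s
lemma eig_shift (A : Matrix (Fin n) (Fin n) ℝ) (hA : A.IsHermitian) (s : ℝ)
    (hA' : (A + s • (1 : Matrix (Fin n) (Fin n) ℝ)).IsHermitian) (i : Fin n) :
    ∃ j, hA'.eigenvalues i = hA.eigenvalues j + s := by
  have h1 : hA'.eigenvalues i ∈ spectrum ℝ (A + s • (1 : Matrix (Fin n) (Fin n) ℝ)) :=
    hA'.eigenvalues_mem_spectrum_real i
  have h2 : A + s • (1 : Matrix (Fin n) (Fin n) ℝ) = A + algebraMap ℝ _ s := by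
    rw [Algebra.algebraMap_eq_smul_one]
  set μ := hA'.eigenvalues i with hμ
  clear_value μ
  rw [h2, ← spectrum.add_singleton_eq, hA.spectrum_real_eq_range_eigenvalues] at h1
  obtain ⟨x, hx, y, hy, hxy⟩ := Set.mem_add.mp h1
  obtain ⟨j, rfl⟩ := hx
  exact ⟨j, by simp_all⟩

/-- The corrected-average eigenvalue bound is at least as tight as the
Raghunathan et al. bound with nonnegative `c`. -/
theorem corrected_bound_tighter (n : ℕ) [NeZero n]
    (M : Matrix (Fin n) (Fin n) ℝ) (hM : M.IsHermitian) :
    sInf {r : ℝ | ∃ h : Fin n → ℝ, (∑ i, h i) = 0 ∧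
        r = n * ⨆ i, (hM.add (Matrix.isHermitian_diagonal h)).eigenvalues i} ≤
      sInf {r : ℝ | ∃ c : Fin n → ℝ, (∀ i, 0 ≤ c i) ∧
        r = (∑ i, c i) +
          n * max (⨆ i, (hM.sub (Matrix.isHermitian_diagonal c)).eigenvalues i) 0} := by
  haveI : Nonempty (Fin n) := Fin.pos_iff_nonempty.mp (Nat.pos_of_ne_zero (NeZero.ne n))
  have hn : (0:ℝ) < n := Nat.cast_pos.mpr (Nat.pos_of_ne_zero (NeZero.ne n))
  -- the left set is bounded below by trace M
  have hbdd : BddBelow {r : ℝ | ∃ h : Fin n → ℝ, (∑ i, h i) = 0 ∧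
      r = n * ⨆ i, (hM.add (Matrix.isHermitian_diagonal h)).eigenvalues i} := by
    refine ⟨M.trace, ?_⟩
    rintro r ⟨h, hsum, rfl⟩
    have hH := hM.add (Matrix.isHermitian_diagonal h)
    have htr : (M + Matrix.diagonal h).trace = M.trace := by
      rw [Matrix.trace_add, Matrix.trace_diagonal, hsum, add_zero]
    have hle : ∀ i, hH.eigenvalues i ≤ ⨆ j, hH.eigenvalues j := fun i =>
      le_ciSup (Set.finite_range _).bddAbove i
    calc M.trace = ∑ i, hH.eigenvalues i := by rw [← htr, trace_eq_sum_eig _ hH]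
      _ ≤ ∑ _i : Fin n, ⨆ j, hH.eigenvalues j := Finset.sum_le_sum fun i _ => hle i
      _ = n * ⨆ j, hH.eigenvalues j := by
          rw [Finset.sum_const, Finset.card_univ, Fintype.card_fin, nsmul_eq_mul]
  refine le_csInf ⟨_, (fun _ => (0:ℝ)), fun i => le_refl 0, rfl⟩ ?_
  rintro b ⟨c, hc, rfl⟩
  set s : ℝ := (∑ i, c i) / n with hs
  have hns : (n:ℝ) * s = ∑ i, c i := by rw [hs]; field_simp
  set h : Fin n → ℝ := fun i => -c i + s with hh
  have hsum : ∑ i, h i = 0 := by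
    simp only [hh, Finset.sum_add_distrib, Finset.sum_neg_distrib, Finset.sum_const,
      Finset.card_univ, Fintype.card_fin, nsmul_eq_mul]
    rw [hns]; ring
  have hmat : M + Matrix.diagonal h = (M - Matrix.diagonal c) + s • (1 : Matrix (Fin n) (Fin n) ℝ) := by
    rw [Matrix.smul_one_eq_diagonal]
    have : Matrix.diagonal h = -Matrix.diagonal c + Matrix.diagonal (fun _ => s) := by
      ext i j
      by_cases hij : i = j <;> simp [hh, Matrix.diagonal, hij]
    rw [this]; abel
  have hB := hM.sub (Matrix.isHermitian_diagonal c)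
  have hB' : ((M - Matrix.diagonal c) + s • (1 : Matrix (Fin n) (Fin n) ℝ)).IsHermitian :=
    hmat ▸ (hM.add (Matrix.isHermitian_diagonal h))
  have hcongr : (hM.add (Matrix.isHermitian_diagonal h)).eigenvalues = hB'.eigenvalues :=
    eig_congr _ _ hmat
  have hsup : (⨆ i, (hM.add (Matrix.isHermitian_diagonal h)).eigenvalues i) ≤
      max (⨆ i, hB.eigenvalues i) 0 + s := by
    rw [hcongr]
    refine ciSup_le fun i => ?_
    obtain ⟨j, hj⟩ := eig_shift (M - Matrix.diagonal c) hB s hB' i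
    rw [hj]
    have : hB.eigenvalues j ≤ ⨆ k, hB.eigenvalues k :=
      le_ciSup (Set.finite_range _).bddAbove j
    have h2 : hB.eigenvalues j ≤ max (⨆ k, hB.eigenvalues k) 0 :=
      this.trans (le_max_left _ _)
    linarith
  refine le_trans (csInf_le hbdd ⟨h, hsum, rfl⟩) ?_
  have : (n:ℝ) * (⨆ i, (hM.add (Matrix.isHermitian_diagonal h)).eigenvalues i) ≤
      (n:ℝ) * (max (⨆ i, hB.eigenvalues i) 0 + s) :=
    mul_le_mul_of_nonneg_left hsup hn.le
  rw [mul_add, hns] at this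
  linarith
end

section
/- For M = [[1, 0], [0, −1]], the value min{2·λ_max(M + diag(h)) : h₁ + h₂ = 0} equals 0, while for every c ∈ ℝ² with c₁, c₂ ≥ 0, c₁ + c₂ + 2·max(λ_max(M − diag(c)), 0) > 0. -/
open Matrix

lemma sup_eig (a : ℝ) {A : Matrix (Fin 2) (Fin 2) ℝ} (hA : A.IsHermitian)
    (hAd : A = Matrix.diagonal ![a, -a]) : (⨆ i, hA.eigenvalues i) = |a| := by
  subst hAd
  have hmem : ∀ i, hA.eigenvalues i = a ∨ hA.eigenvalues i = -a := by
    intro i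
    have h1 := hA.eigenvalues_mem_spectrum_real i
    rw [spectrum_diagonal] at h1
    obtain ⟨j, hj⟩ := h1
    fin_cases j
    · left; simpa using hj.symm
    · right; simpa using hj.symm
  have hdet : hA.eigenvalues 0 * hA.eigenvalues 1 = -(a * a) := by
    have := hA.det_eq_prod_eigenvalues
    simp [det_fin_two, Fin.prod_univ_two] at this
    linarith
  have : max (hA.eigenvalues 0) (hA.eigenvalues 1) = |a| := by
    rcases hmem 0 with h0 | h0 <;> rcases hmem 1 with h1 | h1 <;>
      rw [h0, h1] at hdet ⊢ <;>
      rcases abs_cases a with ⟨he, ha⟩ | ⟨he, ha⟩ <;> rw [he] <;>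
      first
        | exact max_eq_left (by linarith)
        | exact max_eq_right (by linarith)
        | (have ha0 : a = 0 := by nlinarith
           simp [ha0])
  rw [← this]
  apply le_antisymm
  · apply ciSup_le
    intro i
    fin_cases i
    · exact le_max_left _ _
    · exact le_max_right _ _
  · rcases le_total (hA.eigenvalues 0) (hA.eigenvalues 1) with h | h
    · rw [max_eq_right h]; exact le_ciSup (Set.finite_range _).bddAbove 1
    · rw [max_eq_left h]; exact le_ciSup (Set.finite_range _).bddAbove 0

/-- On `M = diag(1, -1)`, the corrected-average bound equals `0`, while the
bound with nonnegative `c` is always strictly positive. -/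
theorem corrected_bound_strictly_tighter :
    sInf {r : ℝ | ∃ h : Fin 2 → ℝ, h 0 + h 1 = 0 ∧
        r = 2 * ⨆ i,
          ((Matrix.isHermitian_diagonal (![1, -1] : Fin 2 → ℝ)).add
            (Matrix.isHermitian_diagonal h)).eigenvalues i} = 0 ∧
    ∀ c : Fin 2 → ℝ, 0 ≤ c 0 → 0 ≤ c 1 →
      0 < c 0 + c 1 + 2 * max (⨆ i,
        ((Matrix.isHermitian_diagonal (![1, -1] : Fin 2 → ℝ)).sub
          (Matrix.isHermitian_diagonal c)).eigenvalues i) 0 := by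
  constructor
  · have hmem : (0 : ℝ) ∈ {r : ℝ | ∃ h : Fin 2 → ℝ, h 0 + h 1 = 0 ∧
        r = 2 * ⨆ i,
          ((Matrix.isHermitian_diagonal (![1, -1] : Fin 2 → ℝ)).add
            (Matrix.isHermitian_diagonal h)).eigenvalues i} := by
      refine ⟨![-1, 1], by norm_num, ?_⟩
      rw [sup_eig 0 _ ?_]
      · norm_num
      · rw [diagonal_add]
        apply congrArg Matrix.diagonal
        funext i
        fin_cases i <;> norm_num
    have hlb : ∀ r ∈ {r : ℝ | ∃ h : Fin 2 → ℝ, h 0 + h 1 = 0 ∧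
        r = 2 * ⨆ i,
          ((Matrix.isHermitian_diagonal (![1, -1] : Fin 2 → ℝ)).add
            (Matrix.isHermitian_diagonal h)).eigenvalues i}, (0:ℝ) ≤ r := by
      rintro r ⟨h, hsum, rfl⟩
      rw [sup_eig (1 + h 0) _ ?_]
      · positivity
      · rw [diagonal_add]
        apply congrArg Matrix.diagonal
        funext i
        fin_cases i <;> simp <;> linarith
    exact le_antisymm (csInf_le ⟨0, hlb⟩ hmem) (le_csInf ⟨0, hmem⟩ hlb)
  · intro c hc0 hc1
    rcases eq_or_lt_of_le (by linarith : (0:ℝ) ≤ c 0 + c 1) with heq | hlt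
    · have hc0' : c 0 = 0 := by linarith
      have hc1' : c 1 = 0 := by linarith
      rw [sup_eig 1 _ ?_]
      · rw [hc0', hc1']; norm_num
      · have : c = 0 := by
          funext i; fin_cases i <;> simpa
        rw [this]; simp
    · have := le_max_right (⨆ i,
        ((Matrix.isHermitian_diagonal (![1, -1] : Fin 2 → ℝ)).sub
          (Matrix.isHermitian_diagonal c)).eigenvalues i) (0:ℝ)
      linarith
end
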